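/- arXiv:0710.1892 — 4 statements merged into one kernel-verified Lean document; each statement's English description precedes it below -/
import Mathlib

section
/- Let G = A *_C B be an amalgamated free product. Suppose η_A : Â → A and η_B : B̂ → B are epimorphisms, and Ĉ_A ≤ Â, Ĉ_B ≤ B̂ are subgroups with η_A(Ĉ_A) = C = η_B(Ĉ_B), together with an isomorphism Ĉ_A ≅ Ĉ_B compatible with η_A, η_B. If every homomorphism Â → Γ factors through η_A and every homomorphism B̂ → Γ factors through η_B, then every homomorphism from Ĝ = Â *_{Ĉ_A = Ĉ_B} B̂ to Γ factors through the induced epimorphism Ĝ → G. -/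
/-- A `Γ`-approximation of an amalgam can be assembled from
`Γ`-approximations of its factors.  Here `G = A *_C B` and `Ghat = Ahat *_{Chat} Bhat`
are amalgamated free products (the latter characterized by joint generation of its
factors, i.e. the uniqueness half of the universal property; the former by the
existence half), `ηA : Ahat → A`, `ηB : Bhat → B`, `ηC : Chat → C` are epimorphisms
compatible with the inclusions, and `π : Ghat → G` is the induced epimorphism.  If every
homomorphism `Ahat → Γ` factors through `ηA` and every homomorphism `Bhat → Γ` factors
through `ηB`, then every homomorphism `Ghat → Γ` factors through `π`. -/
theorem stmt_1 {C A B G Chat Ahat Bhat Ghat Γ : Type}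
    [Group C] [Group A] [Group B] [Group G]
    [Group Chat] [Group Ahat] [Group Bhat] [Group Ghat] [Group Γ]
    (iA : C →* A) (iB : C →* B) (jA : A →* G) (jB : B →* G)
    (hcomm : jA.comp iA = jB.comp iB)
    (hUPG : ∀ (H : Type) [Group H], ∀ (α : A →* H) (β : B →* H),
      α.comp iA = β.comp iB → ∃ h : G →* H, h.comp jA = α ∧ h.comp jB = β)
    (iAhat : Chat →* Ahat) (iBhat : Chat →* Bhat) (jAhat : Ahat →* Ghat)
    (jBhat : Bhat →* Ghat)
    (hcommhat : jAhat.comp iAhat = jBhat.comp iBhat)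
    (hext : ∀ (H : Type) [Group H], ∀ h₁ h₂ : Ghat →* H,
      h₁.comp jAhat = h₂.comp jAhat → h₁.comp jBhat = h₂.comp jBhat → h₁ = h₂)
    (ηA : Ahat →* A) (ηB : Bhat →* B) (ηC : Chat →* C)
    (hηA : Function.Surjective ηA) (hηB : Function.Surjective ηB)
    (hηC : Function.Surjective ηC)
    (hcompA : ηA.comp iAhat = iA.comp ηC) (hcompB : ηB.comp iBhat = iB.comp ηC)
    (π : Ghat →* G) (hπ : Function.Surjective π)
    (hπA : π.comp jAhat = jA.comp ηA) (hπB : π.comp jBhat = jB.comp ηB)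
    (hfacA : ∀ f : Ahat →* Γ, ∃ g : A →* Γ, f = g.comp ηA)
    (hfacB : ∀ f : Bhat →* Γ, ∃ g : B →* Γ, f = g.comp ηB) :
    ∀ f : Ghat →* Γ, ∃ g : G →* Γ, f = g.comp π := by
  intro f
  obtain ⟨α, hα⟩ := hfacA (f.comp jAhat)
  obtain ⟨β, hβ⟩ := hfacB (f.comp jBhat)
  have hkey : α.comp iA = β.comp iB := by
    ext c
    obtain ⟨chat, rfl⟩ := hηC c
    have h1 : α (ηA (iAhat chat)) = f (jAhat (iAhat chat)) :=
      (congrArg (fun g : Ahat →* Γ => g (iAhat chat)) hα).symm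
    have h2 : β (ηB (iBhat chat)) = f (jBhat (iBhat chat)) :=
      (congrArg (fun g : Bhat →* Γ => g (iBhat chat)) hβ).symm
    have h3 : ηA (iAhat chat) = iA (ηC chat) :=
      congrArg (fun g : Chat →* A => g chat) hcompA
    have h4 : ηB (iBhat chat) = iB (ηC chat) :=
      congrArg (fun g : Chat →* B => g chat) hcompB
    have h5 : jAhat (iAhat chat) = jBhat (iBhat chat) :=
      congrArg (fun g : Chat →* Ghat => g chat) hcommhat
    simp only [MonoidHom.comp_apply]
    rw [← h3, ← h4, h1, h2, h5]
  obtain ⟨h, hA, hB⟩ := hUPG Γ α β hkey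
  refine ⟨h, hext Γ f (h.comp π) ?_ ?_⟩
  · rw [MonoidHom.comp_assoc, hπA, ← MonoidHom.comp_assoc, hA, hα]
  · rw [MonoidHom.comp_assoc, hπB, ← MonoidHom.comp_assoc, hB, hβ]
end

section
/- Let Γ be a group such that for every sequence of group epimorphisms G₁ → G₂ → G₃ → ⋯ between finitely generated groups, the corresponding descending chain of injections Hom(G₁,Γ) ⊇ Hom(G₂,Γ) ⊇ ⋯ (via precomposition) eventually stabilizes. Then for every finitely generated group G there exists a finitely presented group Ĝ and an epimorphism η : Ĝ → G such that precomposition with η gives a bijection Hom(G,Γ) → Hom(Ĝ,Γ). -/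
section Aux

variable {F : Type} [Group F] (e : ℕ → F)

/-- Normal closure of the first `k` enumerated relators. -/
def auxSk (k : ℕ) : Subgroup F :=
  Subgroup.normalClosure {x | ∃ i < k, e i = x}

instance auxSk_normal (k : ℕ) : (auxSk e k).Normal :=
  Subgroup.normalClosure_normal

theorem auxSk_mono {a b : ℕ} (hab : a ≤ b) : auxSk e a ≤ auxSk e b :=
  Subgroup.normalClosure_mono (fun _ ⟨i, hi, hx⟩ => ⟨i, lt_of_lt_of_le hi hab, hx⟩)

/-- The chain of quotients. -/
abbrev auxGs (k : ℕ) : Type := F ⧸ auxSk e k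

instance (k : ℕ) : Group (auxGs e k) := QuotientGroup.Quotient.group _

/-- Connecting epimorphisms. -/
def auxCmap (a b : ℕ) (hab : a ≤ b) : auxGs e a →* auxGs e b :=
  QuotientGroup.map _ _ (MonoidHom.id F) (fun _ hx => auxSk_mono e hab hx)

theorem auxCmap_mk (a b : ℕ) (hab : a ≤ b) (x : F) :
    auxCmap e a b hab (QuotientGroup.mk x) = QuotientGroup.mk x := rfl

theorem auxCmap_surjective (a b : ℕ) (hab : a ≤ b) :
    Function.Surjective (auxCmap e a b hab) := by
  intro x
  obtain ⟨y, rfl⟩ := QuotientGroup.mk_surjective (s := auxSk e b) x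
  exact ⟨QuotientGroup.mk y, auxCmap_mk e a b hab y⟩

theorem auxCmap_comp (a b c : ℕ) (hab : a ≤ b) (hbc : b ≤ c) {Γ : Type} [Group Γ]
    (h : auxGs e c →* Γ) :
    (h.comp (auxCmap e b c hbc)).comp (auxCmap e a b hab)
      = h.comp (auxCmap e a c (le_trans hab hbc)) := by
  apply MonoidHom.ext
  intro x
  obtain ⟨y, rfl⟩ := QuotientGroup.mk_surjective (s := auxSk e a) x
  simp only [MonoidHom.comp_apply, auxCmap_mk]

theorem auxGs_fg [Group.FG F] (k : ℕ) : Group.FG (auxGs e k) :=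
  Group.fg_of_surjective (f := QuotientGroup.mk' (auxSk e k))
    (QuotientGroup.mk_surjective)

end Aux

/-- If every descending chain `Hom(G₁,Γ) ⊇ Hom(G₂,Γ) ⊇ ⋯` coming from a
sequence of epimorphisms `G₁ → G₂ → ⋯` of finitely generated groups eventually
stabilizes (i.e. each precomposition map is eventually bijective), then every finitely
generated group `G` admits a finitely presented `Γ`-approximation: a finitely presented
group `Ghat` and an epimorphism `η : Ghat → G` such that precomposition with `η` is a
bijection `Hom(G,Γ) → Hom(Ghat,Γ)`. -/
theorem stmt_3 {Γ : Type} [Group Γ]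
    (hstab : ∀ (Gs : ℕ → Type) (_ : ∀ n, Group (Gs n))
      (f : ∀ n, Gs n →* Gs (n + 1)),
      (∀ n, Function.Surjective (f n)) → (∀ n, Group.FG (Gs n)) →
      ∃ N, ∀ n, N ≤ n →
        Function.Bijective (fun h : Gs (n + 1) →* Γ => h.comp (f n)))
    (G : Type) [Group G] [Group.FG G] :
    ∃ (Ghat : Type) (_ : Group Ghat) (η : Ghat →* G),
      (∃ (k : ℕ) (rels : Finset (FreeGroup (Fin k))),
        Nonempty (Ghat ≃* PresentedGroup (rels : Set (FreeGroup (Fin k))))) ∧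
      Function.Surjective η ∧
      Function.Bijective (fun h : G →* Γ => h.comp η) := by
  classical
  -- Present G as a quotient of a finitely generated free group
  obtain ⟨n, S, hcard, hclos⟩ := Group.fg_iff'.mp ‹Group.FG G›
  have : Countable (FreeGroup (Fin n)) :=
    Function.Injective.countable (FreeGroup.toWord_injective)
  let gen : Fin n → G := fun i => ((S.equivFin.symm (Fin.cast hcard.symm i)) : G)
  let π : FreeGroup (Fin n) →* G := FreeGroup.lift gen
  have hπ : Function.Surjective π := by
    rw [← MonoidHom.range_eq_top, FreeGroup.range_lift_eq_closure]
    have hr : Set.range gen = (S : Set G) := by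
      ext x
      constructor
      · rintro ⟨i, rfl⟩; exact (S.equivFin.symm (Fin.cast hcard.symm i)).2
      · intro hx
        exact ⟨Fin.cast hcard (S.equivFin ⟨x, hx⟩), by simp [gen]⟩
    rw [hr, hclos]
  -- Enumerate the kernel
  have hne : Nonempty (π.ker) := ⟨1⟩
  obtain ⟨e0, he0⟩ := exists_surjective_nat (π.ker)
  let e : ℕ → FreeGroup (Fin n) := fun i => (e0 i : FreeGroup (Fin n))
  have heker : ∀ i, e i ∈ π.ker := fun i => (e0 i).2
  have hecov : ∀ x ∈ π.ker, ∃ i, e i = x := by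
    intro x hx
    obtain ⟨i, hi⟩ := he0 ⟨x, hx⟩
    exact ⟨i, congrArg Subtype.val hi⟩
  have hFfg : Group.FG (FreeGroup (Fin n)) := by
    rw [Group.fg_iff]
    exact ⟨Set.range FreeGroup.of, FreeGroup.closure_range_of _, Set.finite_range _⟩
  obtain ⟨K, hK⟩ := hstab (auxGs e) (fun k => inferInstance)
    (fun k => auxCmap e k (k + 1) (Nat.le_succ k))
    (fun k => auxCmap_surjective e k (k + 1) (Nat.le_succ k))
    (fun k => auxGs_fg e k)
  -- η : auxGs e K →* G
  have hker : auxSk e K ≤ π.ker := by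
    apply Subgroup.normalClosure_le_normal
    rintro x ⟨i, _, rfl⟩
    exact heker i
  refine ⟨auxGs e K, inferInstance, QuotientGroup.lift (auxSk e K) π hker, ?_, ?_, ?_, ?_⟩
  -- finitely presented
  · refine ⟨n, (Finset.range K).image e, ?_⟩
    have hsets : ((((Finset.range K).image e : Finset (FreeGroup (Fin n))) :
        Set (FreeGroup (Fin n)))) = {x | ∃ i < K, e i = x} := by
      ext x; simp [eq_comm]
    exact ⟨QuotientGroup.quotientMulEquivOfEq (M := auxSk e K)
      (N := Subgroup.normalClosure
        (((Finset.range K).image e : Finset (FreeGroup (Fin n))) : Set (FreeGroup (Fin n))))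
      (by rw [auxSk, hsets])⟩
  -- surjectivity of η
  · intro g
    obtain ⟨x, hx⟩ := hπ g
    exact ⟨QuotientGroup.mk x, hx⟩
  -- injectivity of precomposition
  · intro h1 h2 h12
    apply MonoidHom.ext
    intro g
    obtain ⟨x, rfl⟩ := hπ g
    have : h1 (QuotientGroup.lift (auxSk e K) π hker (QuotientGroup.mk x))
        = h2 (QuotientGroup.lift (auxSk e K) π hker (QuotientGroup.mk x)) :=
      congrArg (fun φ => φ (QuotientGroup.mk x)) h12
    simpa using this
  -- surjectivity of precomposition
  · intro h
    -- lift h through the stable chain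
    have hlift : ∀ m (hm : K ≤ m), ∃ hm' : auxGs e m →* Γ,
        hm'.comp (auxCmap e K m hm) = h := by
      intro m hm
      induction m, hm using Nat.le_induction with
      | base =>
        refine ⟨h, ?_⟩
        apply MonoidHom.ext
        intro x
        obtain ⟨y, rfl⟩ := QuotientGroup.mk_surjective (s := auxSk e K) x
        simp only [MonoidHom.comp_apply, auxCmap_mk]
      | succ m hm ih =>
        obtain ⟨hm', hm'eq⟩ := ih
        obtain ⟨hm'', hm''eq⟩ := (hK m hm).2 hm'
        refine ⟨hm'', ?_⟩
        have := auxCmap_comp e K m (m+1) hm (Nat.le_succ m) hm''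
        rw [← this]
        simp only at hm''eq
        rw [hm''eq, hm'eq]
    -- the induced hom on the free group kills ker π
    have hkerφ : π.ker ≤ (h.comp (QuotientGroup.mk' (auxSk e K))).ker := by
      intro x hx
      obtain ⟨i, rfl⟩ := hecov x hx
      obtain ⟨hm, hmeq⟩ := hlift (max K (i + 1)) (le_max_left _ _)
      have hx1 : (QuotientGroup.mk (e i) : auxGs e (max K (i+1))) = 1 := by
        rw [QuotientGroup.eq_one_iff]
        exact Subgroup.subset_normalClosure ⟨i, lt_of_lt_of_le (Nat.lt_succ_self i)
          (le_max_right _ _), rfl⟩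
      have hval : h (QuotientGroup.mk (e i)) = hm (auxCmap e K (max K (i+1)) (le_max_left _ _)
          (QuotientGroup.mk (e i))) := by
        rw [auxCmap_mk, ← hmeq]
        simp only [MonoidHom.comp_apply, auxCmap_mk]
      simp only [MonoidHom.mem_ker, MonoidHom.comp_apply]
      show h (QuotientGroup.mk (e i)) = 1
      rw [hval, auxCmap_mk, hx1, map_one]
    -- factor through G using a right inverse of π
    obtain ⟨πinv, hπinv⟩ := hπ.hasRightInverse
    refine ⟨π.liftOfRightInverse πinv hπinv ⟨h.comp (QuotientGroup.mk' (auxSk e K)), hkerφ⟩, ?_⟩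
    have hcomp : (π.liftOfRightInverse πinv hπinv
        ⟨h.comp (QuotientGroup.mk' (auxSk e K)), hkerφ⟩).comp π
        = h.comp (QuotientGroup.mk' (auxSk e K)) :=
      π.liftOfRightInverse_comp πinv hπinv _
    apply MonoidHom.ext
    intro x
    obtain ⟨y, rfl⟩ := QuotientGroup.mk_surjective (s := auxSk e K) x
    exact congrArg (fun φ => φ y) hcomp
end

section
/- Let Γ be a group in which the centralizer of every nontrivial element is abelian (commutative transitive) and which acts freely on a set S (e.g., on itself by left multiplication). Let c, d ∈ Γ and a, b ∈ Γ, and suppose that for two distinct positive integers j ≠ j' one has (d^b)^{-j}(c^a)^{-1}(d^b)^{j}c^a = (d^b)^{-j'}(c^a)^{-1}(d^b)^{j'}c^a, where x^y denotes y x y^{-1}. If d^b ≠ 1, then c^a commutes with d^b. -/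
/-- Let `Γ` be a torsion-free commutative-transitive group (centralizers of
nontrivial elements are abelian) acting freely on a set `S`.  Writing `x^y = y x y⁻¹`,
if for two distinct positive integers `j ≠ j'` we have
`(d^b)^{-j} (c^a)⁻¹ (d^b)^j c^a = (d^b)^{-j'} (c^a)⁻¹ (d^b)^{j'} c^a`, and `d^b ≠ 1`,
then `c^a` commutes with `d^b`. -/
theorem stmt_4 {Γ S : Type} [Group Γ] [MulAction Γ S]
    (hCT : ∀ g : Γ, g ≠ 1 → ∀ x y : Γ, Commute x g → Commute y g → Commute x y)
    (hfree : ∀ γ : Γ, γ ≠ 1 → ∀ s : S, γ • s ≠ s)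
    (htf : ∀ g : Γ, g ≠ 1 → ∀ k : ℕ, k ≠ 0 → g ^ k ≠ 1)
    (a b c d : Γ) (j j' : ℕ) (hj : 0 < j) (hj' : 0 < j') (hjj' : j ≠ j')
    (heq : (b * d * b⁻¹) ^ (-(j : ℤ)) * (a * c * a⁻¹)⁻¹ * (b * d * b⁻¹) ^ (j : ℤ) *
        (a * c * a⁻¹) =
      (b * d * b⁻¹) ^ (-(j' : ℤ)) * (a * c * a⁻¹)⁻¹ * (b * d * b⁻¹) ^ (j' : ℤ) *
        (a * c * a⁻¹))
    (hd : b * d * b⁻¹ ≠ 1) :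
    Commute (a * c * a⁻¹) (b * d * b⁻¹) := by
  set D := b * d * b⁻¹ with hD
  set C := a * c * a⁻¹ with hC
  have h1 : D ^ (-(j:ℤ)) * C⁻¹ * D ^ (j:ℤ) = D ^ (-(j':ℤ)) * C⁻¹ * D ^ (j':ℤ) :=
    mul_right_cancel heq
  set m : ℤ := (j':ℤ) - j with hm
  have hm0 : m ≠ 0 := by
    simp only [hm, sub_ne_zero]
    exact_mod_cast Ne.symm hjj'
  have h2 : C⁻¹ * D ^ m = D ^ m * C⁻¹ := by
    calc C⁻¹ * D ^ m
        = D ^ (j':ℤ) * (D ^ (-(j':ℤ)) * C⁻¹ * D ^ (j':ℤ)) * D ^ (-(j:ℤ)) := by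
          rw [hm]; group
      _ = D ^ (j':ℤ) * (D ^ (-(j:ℤ)) * C⁻¹ * D ^ (j:ℤ)) * D ^ (-(j:ℤ)) := by rw [h1]
      _ = D ^ m * C⁻¹ := by rw [hm]; group
  have hDm : D ^ m ≠ 1 := by
    rcases Int.natAbs_eq m with he | he
    · rw [he, zpow_natCast]
      exact htf D hd m.natAbs (Int.natAbs_ne_zero.mpr hm0)
    · rw [he, zpow_neg, zpow_natCast, ne_eq, inv_eq_one]
      exact htf D hd m.natAbs (Int.natAbs_ne_zero.mpr hm0)
  have hCcomm : Commute C (D ^ m) := (Commute.inv_left_iff).mp h2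
  have hDcomm : Commute D (D ^ m) := (Commute.refl D).zpow_right m
  exact hCT (D ^ m) hDm C D hCcomm hDcomm
end

section
/- Let Γ be a group and G = A * B a free product of two nontrivial abelian groups. If Hom(G,Γ) contains a homomorphism h that is injective on A and on B with h(A), h(B) nontrivial, and Γ is a torsion-free group in which the centralizer of any non-abelian subgroup is trivial and which contains a non-abelian free subgroup, then there are infinitely many Γ-conjugacy classes of homomorphisms G → Γ. -/
open Monoid

/-- In a group where centralizers of non-abelian subgroups are trivial, any two
elements commuting with a common nontrivial element commute. -/
private lemma stmt19_commute_of_cent {Γ : Type} [Group Γ]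
    (hcent : ∀ S : Subgroup Γ, (∃ x ∈ S, ∃ y ∈ S, ¬ Commute x y) →
      Subgroup.centralizer (S : Set Γ) = ⊥)
    {z u v : Γ} (hz : z ≠ 1) (hu : Commute z u) (hv : Commute z v) : Commute u v := by
  by_contra hc
  have hS : Subgroup.centralizer ((Subgroup.closure {u, v} : Subgroup Γ) : Set Γ) = ⊥ :=
    hcent _ ⟨u, Subgroup.subset_closure (by simp), v, Subgroup.subset_closure (by simp), hc⟩
  have hle : Subgroup.closure {u, v} ≤ Subgroup.centralizer {z} := by
    rw [Subgroup.closure_le]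
    intro w hw
    rw [SetLike.mem_coe, Subgroup.mem_centralizer_iff]
    intro g hg
    rcases hg with rfl
    rcases hw with rfl | hw
    · exact hu.eq
    · rcases hw with rfl
      exact hv.eq
  have hzmem : z ∈ Subgroup.centralizer ((Subgroup.closure {u, v} : Subgroup Γ) : Set Γ) := by
    rw [Subgroup.mem_centralizer_iff]
    intro g hg
    have hgz : g ∈ Subgroup.centralizer {z} := hle hg
    rw [Subgroup.mem_centralizer_iff] at hgz
    exact (hgz z rfl).symm
  rw [hS] at hzmem
  exact hz (Subgroup.mem_bot.1 hzmem)

/-- Powers of a nontrivial element of a torsion-free group are pairwise distinct. -/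
private lemma stmt19_pow_inj {Γ : Type} [Group Γ]
    (htf : ∀ x : Γ, x ≠ 1 → ¬ IsOfFinOrder x) {g : Γ} (hg : g ≠ 1)
    {i j : ℕ} (hij : g ^ i = g ^ j) : i = j := by
  have h0 : orderOf g = 0 := orderOf_eq_zero_iff.2 (htf g hg)
  exact (pow_inj_iff_of_orderOf_eq_zero h0).1 hij

/-- Let `G = A * B` be a free product of two nontrivial abelian groups,
and let `Γ` be a torsion-free group in which the centralizer of any non-abelian
subgroup is trivial and which contains a non-abelian free subgroup.  If there is a
homomorphism `h : G → Γ` injective on `A` and on `B` (with nontrivial images), then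
there are infinitely many `Γ`-conjugacy classes of homomorphisms `G → Γ`. -/
theorem stmt_19 {A B Γ : Type} [CommGroup A] [CommGroup B] [Group Γ]
    [Nontrivial A] [Nontrivial B]
    (htf : ∀ x : Γ, x ≠ 1 → ¬ IsOfFinOrder x)
    (hcent : ∀ S : Subgroup Γ, (∃ x ∈ S, ∃ y ∈ S, ¬ Commute x y) →
      Subgroup.centralizer (S : Set Γ) = ⊥)
    (hfree : ∃ f : FreeGroup (Fin 2) →* Γ, Function.Injective f)
    (h : Coprod A B →* Γ)
    (hA : Function.Injective (h.comp Coprod.inl))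
    (hB : Function.Injective (h.comp Coprod.inr)) :
    ∃ φ : ℕ → (Coprod A B →* Γ),
      ∀ n m, n ≠ m → ∀ γ : Γ, φ n ≠ (MulAut.conj γ).toMonoidHom.comp (φ m) := by
  classical
  obtain ⟨a₀, ha₀⟩ := exists_ne (1 : A)
  obtain ⟨b₀, hb₀⟩ := exists_ne (1 : B)
  set x : Γ := h (Coprod.inl a₀) with hxdef
  set y : Γ := h (Coprod.inr b₀) with hydef
  have hx1 : x ≠ 1 := by
    intro e
    exact ha₀ (hA (show (h.comp Coprod.inl) a₀ = (h.comp Coprod.inl) 1 by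
      simp [MonoidHom.comp_apply, ← hxdef, e]))
  have hy1 : y ≠ 1 := by
    intro e
    exact hb₀ (hB (show (h.comp Coprod.inr) b₀ = (h.comp Coprod.inr) 1 by
      simp [MonoidHom.comp_apply, ← hydef, e]))
  -- the two candidate families
  set Φ : ℕ → (Coprod A B →* Γ) := fun n =>
    Coprod.lift ((h.comp Coprod.inl).comp (powMonoidHom n)) (h.comp Coprod.inr) with hΦdef
  set Ψ : ℕ → (Coprod A B →* Γ) := fun n =>
    Coprod.lift (h.comp Coprod.inl) ((h.comp Coprod.inr).comp (powMonoidHom n)) with hΨdef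
  by_cases hΦok : ∀ n m, n ≠ m → ∀ γ : Γ, Φ n ≠ (MulAut.conj γ).toMonoidHom.comp (Φ m)
  · exact ⟨Φ, hΦok⟩
  push_neg at hΦok
  obtain ⟨n, m, hnm, γ, hEq⟩ := hΦok
  -- extract the two equations from the Φ-failure
  have hxeq : x ^ n = γ * x ^ m * γ⁻¹ := by
    have := DFunLike.congr_fun hEq (Coprod.inl a₀)
    simpa [hΦdef, Coprod.lift_apply_inl, MonoidHom.comp_apply, powMonoidHom_apply,
      map_pow, MulAut.conj_apply, ← hxdef] using this
  have hγy : Commute γ y := by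
    have := DFunLike.congr_fun hEq (Coprod.inr b₀)
    have hyy : y = γ * y * γ⁻¹ := by
      simpa [hΦdef, Coprod.lift_apply_inr, MonoidHom.comp_apply,
        MulAut.conj_apply, ← hydef] using this
    exact mul_inv_eq_iff_eq_mul.mp hyy.symm
  -- γ cannot commute with x
  have hγx : ¬ Commute γ x := by
    intro h1
    have : γ * x ^ m * γ⁻¹ = x ^ m := by
      rw [(h1.pow_right m).eq]; group
    exact hnm (stmt19_pow_inj htf hx1 (hxeq.trans this))
  have hγ1 : γ ≠ 1 := by
    intro e; exact hγx (e ▸ Commute.one_left x)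
  -- hence x and y cannot commute
  have hxy : ¬ Commute x y := by
    intro hc
    exact hγx (stmt19_commute_of_cent hcent hy1 hγy.symm hc.symm)
  -- powers appearing are nontrivial
  have hxm1 : x ^ m ≠ 1 := by
    intro e
    have hn0 : x ^ n = x ^ 0 := by rw [hxeq, e, pow_zero]; group
    have hm0 : x ^ m = x ^ 0 := by rw [e, pow_zero]
    exact hnm ((stmt19_pow_inj htf hx1 hn0).trans
      (stmt19_pow_inj htf hx1 hm0).symm)
  -- now show the Ψ-family works
  refine ⟨Ψ, ?_⟩
  intro p q hpq δ hEq2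
  have hyeq : y ^ p = δ * y ^ q * δ⁻¹ := by
    have := DFunLike.congr_fun hEq2 (Coprod.inr b₀)
    simpa [hΨdef, Coprod.lift_apply_inr, MonoidHom.comp_apply, powMonoidHom_apply,
      map_pow, MulAut.conj_apply, ← hydef] using this
  have hδx : Commute δ x := by
    have := DFunLike.congr_fun hEq2 (Coprod.inl a₀)
    have hxx : x = δ * x * δ⁻¹ := by
      simpa [hΨdef, Coprod.lift_apply_inl, MonoidHom.comp_apply,
        MulAut.conj_apply, ← hxdef] using this
    exact mul_inv_eq_iff_eq_mul.mp hxx.symm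
  have hδy : ¬ Commute δ y := by
    intro h1
    have : δ * y ^ q * δ⁻¹ = y ^ q := by
      rw [(h1.pow_right q).eq]; group
    exact hpq (stmt19_pow_inj htf hy1 (hyeq.trans this))
  have hδ1 : δ ≠ 1 := by
    intro e; exact hδy (e ▸ Commute.one_left y)
  have hyq1 : y ^ q ≠ 1 := by
    intro e
    have hp0 : y ^ p = y ^ 0 := by rw [hyeq, e, pow_zero]; group
    have hq0 : y ^ q = y ^ 0 := by rw [e, pow_zero]
    exact hpq ((stmt19_pow_inj htf hy1 hp0).trans
      (stmt19_pow_inj htf hy1 hq0).symm)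
  -- w := γ⁻¹ x γ commutes with x
  have hwx : Commute (γ⁻¹ * x * γ) x := by
    have c1 : Commute (γ⁻¹ * x * γ⁻¹⁻¹) (γ⁻¹ * x ^ n * γ⁻¹⁻¹) :=
      ((Commute.refl x).pow_right n).map (MulAut.conj γ⁻¹).toMonoidHom
    rw [inv_inv] at c1
    have c2 : γ⁻¹ * x ^ n * γ = x ^ m := by rw [hxeq]; group
    rw [c2] at c1
    exact stmt19_commute_of_cent hcent hxm1 c1.symm ((Commute.refl x).pow_left m)
  -- δ commutes with w, hence γ δ γ⁻¹ commutes with x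
  have hδw : Commute δ (γ⁻¹ * x * γ) :=
    stmt19_commute_of_cent hcent hx1 hδx.symm hwx.symm
  have h5 : Commute (γ * δ * γ⁻¹) x := by
    have c1 : Commute (γ * δ * γ⁻¹) (γ * (γ⁻¹ * x * γ) * γ⁻¹) :=
      hδw.map (MulAut.conj γ).toMonoidHom
    have c2 : γ * (γ⁻¹ * x * γ) * γ⁻¹ = x := by group
    rwa [c2] at c1
  have hcx : Commute (γ * δ * γ⁻¹ * δ⁻¹) x := Commute.mul_left h5 hδx.inv_left
  -- v := δ⁻¹ y δ commutes with y
  have hvy : Commute (δ⁻¹ * y * δ) y := by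
    have c1 : Commute (δ⁻¹ * y * δ⁻¹⁻¹) (δ⁻¹ * y ^ p * δ⁻¹⁻¹) :=
      ((Commute.refl y).pow_right p).map (MulAut.conj δ⁻¹).toMonoidHom
    rw [inv_inv] at c1
    have c2 : δ⁻¹ * y ^ p * δ = y ^ q := by rw [hyeq]; group
    rw [c2] at c1
    exact stmt19_commute_of_cent hcent hyq1 c1.symm ((Commute.refl y).pow_left q)
  have hγv : Commute γ (δ⁻¹ * y * δ) :=
    stmt19_commute_of_cent hcent hy1 hγy.symm hvy.symm
  have h8 : Commute (δ * γ⁻¹ * δ⁻¹) y := by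
    have c1 : Commute (δ * γ⁻¹ * δ⁻¹) (δ * (δ⁻¹ * y * δ) * δ⁻¹) :=
      (hγv.inv_left).map (MulAut.conj δ).toMonoidHom
    have c2 : δ * (δ⁻¹ * y * δ) * δ⁻¹ = y := by group
    rwa [c2] at c1
  have hcy : Commute (γ * δ * γ⁻¹ * δ⁻¹) y := by
    have h9 : Commute (γ * (δ * γ⁻¹ * δ⁻¹)) y := Commute.mul_left hγy h8
    have : γ * δ * γ⁻¹ * δ⁻¹ = γ * (δ * γ⁻¹ * δ⁻¹) := by group
    rwa [this]
  -- endgame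
  by_cases hcc : γ * δ * γ⁻¹ * δ⁻¹ = 1
  · have hγδ : Commute γ δ := by
      have : γ * δ = δ * γ := by
        have e1 : γ * δ * γ⁻¹ = δ := mul_inv_eq_one.mp hcc
        calc γ * δ = (γ * δ * γ⁻¹) * γ := by group
        _ = δ * γ := by rw [e1]
      exact this
    exact hδy (stmt19_commute_of_cent hcent hγ1 hγδ hγy)
  · exact hxy (stmt19_commute_of_cent hcent hcc hcx hcy)
end
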